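/- Let E be a real vector space and A ⊆ E star-shaped with convex complement Aᶜ. Then the Minkowski gauge of A is superadditive on the conic hull of Aᶜ: for all x, y ∈ cone(Aᶜ) = {λ • z : λ ≥ 0, z ∈ Aᶜ} ∪ {0}, one has 𝒟_A(x + y) ≥ 𝒟_A(x) + 𝒟_A(y) (in [0,∞]). -/

import Mathlib

open ENNReal

/-- The Minkowski gauge of a set `A` in a real vector space, with values in `[0,∞]`
(the infimum of the empty set being `∞`). -/
noncomputable def mgauge {E : Type*} [AddCommGroup E] [Module ℝ E] (A : Set E) (x : E) : ℝ≥0∞ :=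
  sInf {r : ℝ≥0∞ | ∃ m : ℝ, 0 < m ∧ m⁻¹ • x ∈ A ∧ r = ENNReal.ofReal m}

/-- The conic hull of a set `S`: `{λ • z : λ ≥ 0, z ∈ S} ∪ {0}`. -/
def conicHull {E : Type*} [AddCommGroup E] [Module ℝ E] (S : Set E) : Set E :=
  {y : E | ∃ l : ℝ, 0 ≤ l ∧ ∃ z ∈ S, y = l • z} ∪ {0}

section Aux

variable {E : Type*} [AddCommGroup E] [Module ℝ E] {A : Set E}

/-- upward closure of the admissible set from star-shapedness -/
lemma aux_up (hstar : ∀ x ∈ A, ∀ l ∈ Set.Icc (0 : ℝ) 1, l • x ∈ A)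
    {m m' : ℝ} (hm : 0 < m) (hmm : m ≤ m') {x : E} (h : m⁻¹ • x ∈ A) :
    m'⁻¹ • x ∈ A := by
  have hm' : 0 < m' := hm.trans_le hmm
  have h2 := hstar _ h (m / m') ⟨by positivity, by rw [div_le_one hm']; exact hmm⟩
  rwa [smul_smul, show m / m' * m⁻¹ = m'⁻¹ by field_simp] at h2

lemma mgauge_le {x : E} {m : ℝ} (hm : 0 < m) (h : m⁻¹ • x ∈ A) :
    mgauge A x ≤ ENNReal.ofReal m :=
  sInf_le ⟨m, hm, h, rfl⟩

lemma aux_compl {x : E} {a : ℝ} (ha : 0 < a) (h : ENNReal.ofReal a < mgauge A x) :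
    a⁻¹ • x ∈ Aᶜ := by
  intro hmem
  exact absurd (mgauge_le ha hmem) (not_le.mpr h)

lemma aux_lb (hstar : ∀ x ∈ A, ∀ l ∈ Set.Icc (0 : ℝ) 1, l • x ∈ A)
    {z : E} (hz : z ∈ Aᶜ) {l : ℝ} (hl : 0 < l) :
    ENNReal.ofReal l ≤ mgauge A (l • z) := by
  apply le_sInf
  rintro r ⟨m, hm, hmem, rfl⟩
  rw [ENNReal.ofReal_le_ofReal_iff hm.le]
  by_contra h
  push_neg at h
  apply hz
  have h2 := hstar _ hmem (m / l) ⟨by positivity, by rw [div_le_one hl]; exact h.le⟩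
  rwa [smul_smul, smul_smul, show m / l * m⁻¹ * l = 1 by field_simp, one_smul] at h2

lemma aux_zero (h0 : (0 : E) ∈ A) : mgauge A (0 : E) = 0 := by
  refine le_antisymm ?_ (zero_le)
  refine ENNReal.le_of_forall_pos_le_add fun ε hε _ => ?_
  rw [zero_add]
  have : mgauge A (0 : E) ≤ ENNReal.ofReal (ε : ℝ) :=
    mgauge_le (by exact_mod_cast hε) (by simpa using h0)
  rwa [ENNReal.ofReal_coe_nnreal] at this

lemma aux_top (hstar : ∀ x ∈ A, ∀ l ∈ Set.Icc (0 : ℝ) 1, l • x ∈ A)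
    (hconv : Convex ℝ Aᶜ) (h0 : (0 : E) ∈ Aᶜ) {y : E} (hy : y ∈ conicHull Aᶜ) :
    mgauge A y = ⊤ := by
  rw [mgauge, sInf_eq_top]
  rintro r ⟨m, hm, hmem, rfl⟩
  exfalso
  rw [conicHull, Set.mem_union, Set.mem_singleton_iff] at hy
  rcases hy with ⟨l, hl0, z, hz, rfl⟩ | rfl
  · rcases hl0.eq_or_lt with rfl | hl
    · rw [zero_smul, smul_zero] at hmem
      exact h0 hmem
    · have hle : l ≤ m := by
        have h1 := aux_lb hstar hz hl
        have h2 : mgauge A (l • z) ≤ ENNReal.ofReal m := mgauge_le hm hmem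
        have h3 := h1.trans h2
        rwa [ENNReal.ofReal_le_ofReal_iff hm.le] at h3
      have hc := hconv h0 hz (a := 1 - l / m) (b := l / m)
        (by rw [sub_nonneg, div_le_one hm]; exact hle) (by positivity) (by ring)
      rw [smul_zero, zero_add] at hc
      apply hc
      rwa [show (l / m) • z = m⁻¹ • (l • z) by rw [smul_smul]; congr 1; field_simp]
  · rw [smul_zero] at hmem
    exact h0 hmem

lemma aux_key (hstar : ∀ x ∈ A, ∀ l ∈ Set.Icc (0 : ℝ) 1, l • x ∈ A)
    (hconv : Convex ℝ Aᶜ) {x y : E} {a b m : ℝ} (ha : 0 < a) (hb : 0 < b) (hm : 0 < m)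
    (hab : m ≤ a + b) (hxa : a⁻¹ • x ∈ Aᶜ) (hyb : b⁻¹ • y ∈ Aᶜ)
    (hmem : m⁻¹ • (x + y) ∈ A) : False := by
  have hab0 : 0 < a + b := by linarith
  have hc := hconv hxa hyb (a := a / (a + b)) (b := b / (a + b))
    (by positivity) (by positivity) (by field_simp)
  rw [smul_smul, smul_smul, show a / (a + b) * a⁻¹ = (a + b)⁻¹ by field_simp,
    show b / (a + b) * b⁻¹ = (a + b)⁻¹ by field_simp, ← smul_add] at hc
  exact hc (aux_up hstar hm hab hmem)

end Aux

theorem stmt_12 {E : Type*} [AddCommGroup E] [Module ℝ E] (A : Set E)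
    (hstar : ∀ x ∈ A, ∀ l ∈ Set.Icc (0 : ℝ) 1, l • x ∈ A)
    (hconv : Convex ℝ Aᶜ)
    (x y : E) (hx : x ∈ conicHull Aᶜ) (hy : y ∈ conicHull Aᶜ) :
    mgauge A x + mgauge A y ≤ mgauge A (x + y) := by
  refine le_sInf ?_
  rintro r ⟨m, hm, hmem, rfl⟩
  -- reduce to the case x ≠ 0, y ≠ 0
  rcases eq_or_ne x 0 with rfl | hx0
  · rw [zero_add] at hmem
    by_cases h0 : (0 : E) ∈ A
    · rw [aux_zero h0, zero_add]
      exact mgauge_le hm hmem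
    · exfalso
      have h1 : mgauge A y ≤ ENNReal.ofReal m := mgauge_le hm hmem
      rw [aux_top hstar hconv h0 hy] at h1
      exact absurd h1 (by simp)
  rcases eq_or_ne y 0 with rfl | hy0
  · rw [add_zero] at hmem
    by_cases h0 : (0 : E) ∈ A
    · rw [aux_zero h0, add_zero]
      exact mgauge_le hm hmem
    · exfalso
      have h1 : mgauge A x ≤ ENNReal.ofReal m := mgauge_le hm hmem
      rw [aux_top hstar hconv h0 hx] at h1
      exact absurd h1 (by simp)
  -- now x = l • z, y = k • w with l, k > 0
  rw [conicHull, Set.mem_union, Set.mem_singleton_iff] at hx hy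
  rcases hx with ⟨l, hl0, z, hz, rfl⟩ | rfl
  swap; · exact absurd rfl hx0
  rcases hy with ⟨k, hk0, w, hw, rfl⟩ | rfl
  swap; · exact absurd rfl hy0
  have hl : 0 < l := hl0.lt_of_ne (by rintro rfl; exact hx0 (zero_smul ℝ z))
  have hk : 0 < k := hk0.lt_of_ne (by rintro rfl; exact hy0 (zero_smul ℝ w))
  have hgx := aux_lb hstar hz hl
  have hgy := aux_lb hstar hw hk
  by_contra hlt
  push_neg at hlt
  -- find a, b
  obtain ⟨a, b, ha, hb, hab, hxa, hyb⟩ : ∃ a b : ℝ, 0 < a ∧ 0 < b ∧ m ≤ a + b ∧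
      a⁻¹ • (l • z) ∈ Aᶜ ∧ b⁻¹ • (k • w) ∈ Aᶜ := by
    rcases eq_or_ne (mgauge A (l • z)) ⊤ with hxt | hxt
    · refine ⟨m, k, hm, hk, by linarith, aux_compl hm (hxt ▸ ofReal_lt_top), ?_⟩
      rwa [inv_smul_smul₀ hk.ne']
    rcases eq_or_ne (mgauge A (k • w)) ⊤ with hyt | hyt
    · refine ⟨l, m, hl, hm, by linarith, ?_, aux_compl hm (hyt ▸ ofReal_lt_top)⟩
      rwa [inv_smul_smul₀ hl.ne']
    · set rx := (mgauge A (l • z)).toReal with hrx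
      set ry := (mgauge A (k • w)).toReal with hry
      have hrxp : 0 < rx :=
        ENNReal.toReal_pos ((ENNReal.ofReal_pos.mpr hl).trans_le hgx).ne' hxt
      have hryp : 0 < ry :=
        ENNReal.toReal_pos ((ENNReal.ofReal_pos.mpr hk).trans_le hgy).ne' hyt
      have hmsum : m < rx + ry := by
        rw [← ENNReal.ofReal_toReal hxt, ← ENNReal.ofReal_toReal hyt,
          ← ENNReal.ofReal_add hrxp.le hryp.le] at hlt
        exact (ENNReal.ofReal_lt_ofReal_iff (by positivity)).mp hlt
      set t := m / (rx + ry) with ht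
      have htp : 0 < t := by positivity
      have ht1 : t < 1 := (div_lt_one (by positivity)).mpr hmsum
      refine ⟨rx * t, ry * t, by positivity, by positivity, le_of_eq ?_, ?_, ?_⟩
      · rw [ht]; field_simp
      · refine aux_compl (by positivity) ?_
        calc ENNReal.ofReal (rx * t) < ENNReal.ofReal rx :=
              (ENNReal.ofReal_lt_ofReal_iff hrxp).mpr (by nlinarith)
          _ = mgauge A (l • z) := ENNReal.ofReal_toReal hxt
      · refine aux_compl (by positivity) ?_
        calc ENNReal.ofReal (ry * t) < ENNReal.ofReal ry :=
              (ENNReal.ofReal_lt_ofReal_iff hryp).mpr (by nlinarith)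
          _ = mgauge A (k • w) := ENNReal.ofReal_toReal hyt
  exact aux_key hstar hconv ha hb hm hab hxa hyb hmem
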